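/- Let I = {1,…,κ} with κ ≥ 2, and for each i ∈ I let A_i ∈ ℝ^{2×2} be invertible with ‖A_i‖ < 1. Suppose there exist θ ∈ S¹ and 0 < β < π/2 such that A_i(cl X(θ,β)) ⊂ X(θ,β) and A_iᵀ(cl X(θ,β)) ⊂ X(θ,β) for every i ∈ I. Then for every finite word 𝚒 and every x ∈ X(θ,β), |A_𝚒 x| ≥ cos(β)·α₁(A_𝚒)·|x|. -/

import Mathlib

open MeasureTheory Filter Matrix Real Set

noncomputable section

abbrev E2 := EuclideanSpace ℝ (Fin 2)

noncomputable def mLin (A : Matrix (Fin 2) (Fin 2) ℝ) : E2 →L[ℝ] E2 :=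
  LinearMap.toContinuousLinearMap (Matrix.toEuclideanLin A)

/-- largest singular value = operator norm -/
noncomputable def a1 (A : Matrix (Fin 2) (Fin 2) ℝ) : ℝ := ‖mLin A‖

/-- smallest singular value -/
noncomputable def a2 (A : Matrix (Fin 2) (Fin 2) ℝ) : ℝ := |A.det| / a1 A

/-- product of the matrices along a finite word -/
noncomputable def wprod {κ : ℕ} (A : Fin κ → Matrix (Fin 2) (Fin 2) ℝ) (l : List (Fin κ)) :
    Matrix (Fin 2) (Fin 2) ℝ := (l.map A).prod

/-- the cone X(θ,β) -/
def cone (θ : E2) (β : ℝ) : Set E2 :=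
  {x | x ≠ 0 ∧ Real.cos (β / 2) * ‖x‖ < |(inner ℝ θ x : ℝ)|}

/-- unoriented angle between the lines spanned by two vectors -/
noncomputable def uangle (u v : E2) : ℝ :=
  Real.arccos (|(inner ℝ u v : ℝ)| / (‖u‖ * ‖v‖))

/- ### auxiliary lemmas -/

lemma inner2 (x y : E2) : (inner ℝ x y : ℝ) = x 0 * y 0 + x 1 * y 1 := by
  simp [PiLp.inner_apply, Fin.sum_univ_two, RCLike.inner_apply, mul_comm]

lemma normsq2 (x : E2) : ‖x‖^2 = x 0^2 + x 1^2 := by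
  rw [← real_inner_self_eq_norm_sq, inner2]; ring

noncomputable def perp (v : E2) : E2 := (WithLp.equiv 2 (Fin 2 → ℝ)).symm ![-(v 1), v 0]

lemma perp0 (v : E2) : perp v 0 = -(v 1) := rfl
lemma perp1 (v : E2) : perp v 1 = v 0 := rfl

lemma tel_apply (M : Matrix (Fin 2) (Fin 2) ℝ) (v : E2) (i : Fin 2) :
    (Matrix.toEuclideanLin M v) i = M i 0 * v 0 + M i 1 * v 1 := by
  simp [Matrix.toEuclideanLin_apply, Matrix.mulVec, dotProduct, Fin.sum_univ_two]
  fin_cases i <;> rfl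

lemma mLin_apply (M : Matrix (Fin 2) (Fin 2) ℝ) (v : E2) :
    mLin M v = Matrix.toEuclideanLin M v := rfl

lemma tel_mul (M N : Matrix (Fin 2) (Fin 2) ℝ) (v : E2) :
    Matrix.toEuclideanLin (M * N) v = Matrix.toEuclideanLin M (Matrix.toEuclideanLin N v) := by
  simp [Matrix.toEuclideanLin_apply, Matrix.mulVec_mulVec]

lemma tel_transpose (M : Matrix (Fin 2) (Fin 2) ℝ) (x y : E2) :
    (inner ℝ (Matrix.toEuclideanLin Mᵀ x) y : ℝ) = (inner ℝ x (Matrix.toEuclideanLin M y) : ℝ) := by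
  simp only [inner2, tel_apply, Matrix.transpose_apply]; ring

lemma inner_comb (y u u' : E2) (a b : ℝ) :
    (inner ℝ y (a•u + b•u') : ℝ) = a*(inner ℝ y u : ℝ) + b*(inner ℝ y u' : ℝ) := by
  rw [inner_add_right, real_inner_smul_right, real_inner_smul_right]

lemma norm_comb (u u' : E2) (a b : ℝ) :
    ‖a•u + b•u'‖^2 = a^2*‖u‖^2 + 2*a*b*(inner ℝ u u' : ℝ) + b^2*‖u'‖^2 := by
  simp only [normsq2, inner2, PiLp.add_apply, PiLp.smul_apply, smul_eq_mul]
  ring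

lemma parseval (v : E2) (hv : ‖v‖ = 1) (x y : E2) :
    (inner ℝ x y : ℝ) = (inner ℝ v x : ℝ) * (inner ℝ v y : ℝ)
      + (inner ℝ (perp v) x : ℝ) * (inner ℝ (perp v) y : ℝ) := by
  have hv2 : v 0 ^2 + v 1^2 = 1 := by rw [← normsq2, hv]; norm_num
  simp only [inner2, perp0, perp1]
  linear_combination (-(x 0 * y 0 + x 1 * y 1)) * hv2

lemma expansion (v : E2) (hv : ‖v‖ = 1) (z : E2) :
    z = (inner ℝ v z : ℝ) • v + (inner ℝ (perp v) z : ℝ) • perp v := by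
  have hv2 : v 0 ^2 + v 1^2 = 1 := by rw [← normsq2, hv]; norm_num
  have h0 : z 0 = ((inner ℝ v z : ℝ) • v + (inner ℝ (perp v) z : ℝ) • perp v) 0 := by
    simp only [PiLp.add_apply, PiLp.smul_apply, smul_eq_mul, inner2, perp0, perp1]
    linear_combination (-(z 0)) * hv2
  have h1 : z 1 = ((inner ℝ v z : ℝ) • v + (inner ℝ (perp v) z : ℝ) • perp v) 1 := by
    simp only [PiLp.add_apply, PiLp.smul_apply, smul_eq_mul, inner2, perp0, perp1]
    linear_combination (-(z 1)) * hv2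
  ext i
  fin_cases i
  · exact h0
  · exact h1

lemma sinA {x y pp qq : ℝ} (hy : 0 ≤ y) (hqq : 0 < qq) (hx : x < pp)
    (h1 : x^2 + y^2 = 1) (h2 : pp^2 + qq^2 = 1) : 0 ≤ y * pp - x * qq := by
  rcases le_or_gt x 0 with hx0 | hx0
  · rcases le_or_gt 0 pp with hp0 | hp0
    · nlinarith
    · nlinarith [sq_nonneg (y - qq), sq_nonneg (x - pp), mul_pos hqq hqq]
  · have hy2 : qq^2 < y^2 := by nlinarith
    have hyq : qq < y := by nlinarith
    nlinarith [mul_pos hqq (sub_pos.2 hx)]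

lemma sinB {x y pp qq : ℝ} (hy : y < 0) (hqq : 0 < qq) (hx : x < pp)
    (h1 : x^2 + y^2 = 1) (h2 : pp^2 + qq^2 = 1) : y * pp + x * qq ≤ 0 := by
  have := sinA (x := x) (y := -y) (pp := pp) (qq := qq) (by linarith) hqq hx (by nlinarith) h2
  nlinarith

lemma core {a b c s μ ν : ℝ} (hab : a^2 + b^2 = 1) (hcs : c^2 + s^2 = 1)
    (hs : 0 < s) (hc : 0 < c) (ha : a^2 < c^2) (hν : 0 ≤ ν) (hμν : ν < μ)
    (hfp : c^2 * (μ^2*(c*a - s*b)^2 + ν^2*(c*b + s*a)^2) < (a*μ*(c*a - s*b) + b*ν*(c*b + s*a))^2)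
    (hfm : c^2 * (μ^2*(c*a + s*b)^2 + ν^2*(c*b - s*a)^2) < (a*μ*(c*a + s*b) + b*ν*(c*b - s*a))^2) :
    False := by
  set x := a^2 - b^2 with hxdef
  set y := 2*(a*b) with hydef
  set pp := c^2 - s^2 with hppdef
  set qq := 2*(s*c) with hqqdef
  set P := (μ + ν)/2 with hPdef
  set Q := (μ - ν)/2 with hQdef
  have hQ : 0 < Q := by simp only [hQdef]; linarith
  have hP : 0 < P := by simp only [hPdef]; linarith
  have hqq : 0 < qq := by simp only [hqqdef]; positivity
  have hxy : x^2 + y^2 = 1 := by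
    simp only [hxdef, hydef]; linear_combination (a^2 + b^2 + 1) * hab
  have hppqq : pp^2 + qq^2 = 1 := by
    simp only [hppdef, hqqdef]; linear_combination (c^2 + s^2 + 1) * hcs
  have hxpp : x < pp := by simp only [hxdef, hppdef]; nlinarith
  have idp : (a*μ*(c*a - s*b) + b*ν*(c*b + s*a))^2 - c^2 * (μ^2*(c*a - s*b)^2 + ν^2*(c*b + s*a)^2)
      = (y*pp + x*qq) * Q * (P*qq - Q*y) := by
    simp only [hxdef, hydef, hppdef, hqqdef, hPdef, hQdef]
    linear_combination (c^2*μ^2 - c^2*s^2*μ^2 - c^4*μ^2 + b^2*c^2*ν^2 + a*b*c*s*ν^2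
      - a*b*c*s*μ^2 + a^2*c^2*μ^2) * hab
      + (-(c^2*μ^2) - b^2*c^2*ν^2 + b^2*c^2*μ^2 - a*b*c*s*ν^2 + a*b*c*s*μ^2) * hcs
  have idm : (a*μ*(c*a + s*b) + b*ν*(c*b - s*a))^2 - c^2 * (μ^2*(c*a + s*b)^2 + ν^2*(c*b - s*a)^2)
      = -((y*pp - x*qq) * Q * (P*qq + Q*y)) := by
    simp only [hxdef, hydef, hppdef, hqqdef, hPdef, hQdef]
    linear_combination (c^2*μ^2 - c^2*s^2*μ^2 - c^4*μ^2 + b^2*c^2*ν^2 - a*b*c*s*ν^2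
      + a*b*c*s*μ^2 + a^2*c^2*μ^2) * hab
      + (-(c^2*μ^2) - b^2*c^2*ν^2 + b^2*c^2*μ^2 + a*b*c*s*ν^2 - a*b*c*s*μ^2) * hcs
  have hfp' : 0 < (y*pp + x*qq) * Q * (P*qq - Q*y) := by rw [← idp]; linarith
  have hfm' : 0 < -((y*pp - x*qq) * Q * (P*qq + Q*y)) := by rw [← idm]; linarith
  clear hfp hfm idp idm hab hcs ha hν hμν hs hc
  rcases le_or_gt 0 y with hy | hy
  · have h1 := sinA hy hqq hxpp hxy hppqq
    have h2 : 0 < P*qq + Q*y := by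
      have := mul_pos hP hqq
      have := mul_nonneg hQ.le hy
      linarith
    have hT : 0 ≤ (y*pp - x*qq) * Q * (P*qq + Q*y) :=
      mul_nonneg (mul_nonneg h1 hQ.le) h2.le
    linarith
  · have h1 := sinB hy hqq hxpp hxy hppqq
    have h2 : 0 < P*qq - Q*y := by
      have := mul_pos hP hqq
      have := mul_nonpos_of_nonneg_of_nonpos hQ.le hy.le
      linarith
    have h1Q : (y*pp + x*qq) * Q ≤ 0 := mul_nonpos_of_nonpos_of_nonneg h1 hQ.le
    have hT : (y*pp + x*qq) * Q * (P*qq - Q*y) ≤ 0 :=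
      mul_nonpos_of_nonpos_of_nonneg h1Q h2.le
    linarith

lemma mem_closure_cone (θ : E2) (hθ : ‖θ‖ = 1) (β : ℝ) (hβ : 0 < β) (hβ' : β < π/2) (z : E2)
    (hz : Real.cos (β/2) * ‖z‖ ≤ |(inner ℝ θ z : ℝ)|) : z ∈ closure (cone θ β) := by
  have hc1 : Real.cos (β/2) < 1 := by
    have : Real.cos (β/2) < Real.cos 0 := by
      apply Real.cos_lt_cos_of_nonneg_of_le_pi (le_refl 0) (by linarith [Real.pi_pos]) (by linarith)
    simpa using this
  have hcpos : 0 < Real.cos (β/2) := by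
    apply Real.cos_pos_of_mem_Ioo
    constructor
    · linarith [Real.pi_pos]
    · linarith
  rw [Metric.mem_closure_iff]
  intro ε hε
  set σ : ℝ := if 0 ≤ (inner ℝ θ z : ℝ) then 1 else -1 with hσ
  have hσ1 : |σ| = 1 := by rw [hσ]; split <;> norm_num
  have h1 : (inner ℝ θ (z + (ε/2 * σ) • θ) : ℝ) = (inner ℝ θ z : ℝ) + ε/2 * σ := by
    rw [inner_add_right, real_inner_smul_right, real_inner_self_eq_norm_mul_norm, hθ]
    ring
  have h2 : |(inner ℝ θ (z + (ε/2 * σ) • θ) : ℝ)| = |(inner ℝ θ z : ℝ)| + ε/2 := by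
    rw [h1, hσ]
    rcases le_or_gt 0 (inner ℝ θ z : ℝ) with h | h
    · rw [if_pos h, abs_of_nonneg h, abs_of_nonneg]
      · ring
      · positivity
    · rw [if_neg (not_le.2 h), abs_of_neg h, abs_of_neg (by linarith)]
      ring
  refine ⟨z + (ε/2 * σ) • θ, ⟨?_, ?_⟩, ?_⟩
  · intro h0
    rw [h0, inner_zero_right, abs_zero] at h2
    have : 0 ≤ |(inner ℝ θ z : ℝ)| := abs_nonneg _
    linarith
  · have hnn : ‖z + (ε/2 * σ) • θ‖ ≤ ‖z‖ + ε/2 := by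
      calc ‖z + (ε/2 * σ) • θ‖ ≤ ‖z‖ + ‖(ε/2 * σ) • θ‖ := norm_add_le _ _
      _ = ‖z‖ + ε/2 := by
          rw [norm_smul, hθ, Real.norm_eq_abs, abs_mul, hσ1]
          rw [abs_of_pos (by positivity : (0:ℝ) < ε/2)]; ring
    rw [h2]
    calc Real.cos (β/2) * ‖z + (ε/2 * σ) • θ‖ ≤ Real.cos (β/2) * (‖z‖ + ε/2) := by
          apply mul_le_mul_of_nonneg_left hnn hcpos.le
    _ < |(inner ℝ θ z : ℝ)| + ε/2 := by nlinarith
  · rw [dist_comm]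
    have : dist (z + (ε/2 * σ) • θ) z = ‖(ε/2 * σ) • θ‖ := by
      rw [dist_eq_norm]; congr 1; abel
    rw [this, norm_smul, hθ, Real.norm_eq_abs, abs_mul, hσ1]
    rw [abs_of_pos (by positivity : (0:ℝ) < ε/2)]
    linarith

lemma exists_max_vec (B : Matrix (Fin 2) (Fin 2) ℝ) :
    ∃ v : E2, ‖v‖ = 1 ∧ ‖mLin B‖ = ‖mLin B v‖ := by
  have hcomp : IsCompact (Metric.sphere (0:E2) 1) := isCompact_sphere 0 1
  have hne : (Metric.sphere (0:E2) 1).Nonempty :=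
    NormedSpace.sphere_nonempty.mpr zero_le_one
  obtain ⟨v, hv, hmax⟩ := hcomp.exists_isMaxOn hne ((mLin B).continuous.norm.continuousOn)
  have hv1 : ‖v‖ = 1 := by simpa using hv
  refine ⟨v, hv1, le_antisymm ?_ ?_⟩
  · apply ContinuousLinearMap.opNorm_le_bound _ (by positivity)
    intro z
    by_cases hz : z = 0
    · simp [hz]
    · have hzn : (0:ℝ) < ‖z‖ := norm_pos_iff.mpr hz
      have hu : (‖z‖⁻¹ • z) ∈ Metric.sphere (0:E2) 1 := by
        simp [norm_smul, abs_of_pos hzn, inv_mul_cancel₀ hzn.ne']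
      have h : ‖mLin B (‖z‖⁻¹ • z)‖ ≤ ‖mLin B v‖ := hmax hu
      rw [_root_.map_smul, norm_smul, Real.norm_eq_abs, abs_of_pos (inv_pos.mpr hzn)] at h
      calc ‖mLin B z‖ = ‖z‖ * (‖z‖⁻¹ * ‖mLin B z‖) := by field_simp
      _ ≤ ‖z‖ * ‖mLin B v‖ := by
          apply mul_le_mul_of_nonneg_left _ hzn.le
          exact h
      _ = ‖mLin B v‖ * ‖z‖ := by ring
  · calc ‖mLin B v‖ ≤ ‖mLin B‖ * ‖v‖ := (mLin B).le_opNorm v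
    _ = ‖mLin B‖ := by rw [hv1, mul_one]


lemma le_of_sq_le_sq' {L R : ℝ} (hL : 0 ≤ L) (hR : 0 ≤ R) (h : L^2 ≤ R^2) : L ≤ R := by
  nlinarith [sq_nonneg (R - L)]

lemma sq_le_sq_of_le' {A N n : ℝ} (hA : 0 ≤ A) (hN : 0 ≤ N) (hn : 0 ≤ n) (h : A ≤ N * n) :
    A^2 ≤ N^2 * n^2 := by nlinarith [mul_nonneg hN hn]

lemma sq_lt_of_lt_abs' {c n i : ℝ} (hcn : 0 ≤ c * n) (h : c * n < |i|) : c^2 * n^2 < i^2 := by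
  nlinarith [sq_abs i, abs_nonneg i]

lemma le_abs_of_sq' {c u : ℝ} (hc : 0 ≤ c) (h : c^2 ≤ u^2) : c ≤ |u| := by
  nlinarith [sq_abs u, abs_nonneg u]

lemma abs_le_of_sq' {u s : ℝ} (hs : 0 ≤ s) (h : u^2 ≤ s^2) : |u| ≤ s := by
  nlinarith [sq_abs u, abs_nonneg u]

lemma sq_le_of_le_abs' {L u : ℝ} (hL : 0 ≤ L) (h : L ≤ |u|) : L^2 ≤ u^2 := by
  nlinarith [sq_abs u, abs_nonneg u]

lemma comp_bound1 {c s iv pv : ℝ} (hcs : c^2 + s^2 = 1) (h : c ≤ |iv|)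
    (h2 : iv^2 + pv^2 = 1) (hc : 0 ≤ c) : pv^2 ≤ s^2 := by
  nlinarith [sq_abs iv, abs_nonneg iv]

lemma comp_bound2 {c s ix px nx : ℝ} (hcs : c^2 + s^2 = 1) (h : c * nx ≤ |ix|)
    (h2 : nx^2 = ix^2 + px^2) (hc : 0 ≤ c) (hnx : 0 ≤ nx) : px^2 ≤ s^2 * nx^2 := by
  nlinarith [sq_abs ix, abs_nonneg ix, mul_nonneg hc hnx]

lemma eq_one_of_sq_eq_one {n : ℝ} (hn : 0 ≤ n) (h : n^2 = 1) : n = 1 := by nlinarith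

lemma perp_norm (v : E2) : ‖perp v‖ = ‖v‖ := by
  have h1 := normsq2 v; have h2 := normsq2 (perp v)
  rw [perp0, perp1] at h2
  nlinarith [norm_nonneg v, norm_nonneg (perp v)]

lemma perp_inner (v : E2) : (inner ℝ v (perp v) : ℝ) = 0 := by
  rw [inner2, perp0, perp1]; ring

set_option maxHeartbeats 1600000 in
lemma single (θ : E2) (hθ : ‖θ‖ = 1) (β : ℝ) (hβ : 0 < β) (hβ' : β < π/2)
    (B : Matrix (Fin 2) (Fin 2) ℝ)
    (hB : ∀ x ∈ closure (cone θ β), x ≠ 0 → Matrix.toEuclideanLin B x ∈ cone θ β)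
    (hBt : ∀ x ∈ closure (cone θ β), x ≠ 0 → Matrix.toEuclideanLin Bᵀ x ∈ cone θ β) :
    ∀ x ∈ cone θ β, Real.cos β * a1 B * ‖x‖ ≤ ‖Matrix.toEuclideanLin B x‖ := by
  have hπ := Real.pi_pos
  set c := Real.cos (β/2) with hcdef
  set s := Real.sin (β/2) with hsdef
  have hc : 0 < c := Real.cos_pos_of_mem_Ioo ⟨by linarith, by linarith⟩
  have hs : 0 < s := Real.sin_pos_of_pos_of_lt_pi (by linarith) (by linarith)
  have hcs : c^2 + s^2 = 1 := by rw [hcdef, hsdef]; exact Real.cos_sq_add_sin_sq _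
  have hβeq := Real.cos_two_mul (β/2)
  rw [show 2*(β/2) = β by ring] at hβeq
  have hcosβ : Real.cos β = c^2 - s^2 := by rw [hβeq, ← hcdef]; linarith
  have hcβpos : 0 < Real.cos β := Real.cos_pos_of_mem_Ioo ⟨by linarith, by linarith⟩
  have hcβ1 : Real.cos β ≤ 1 := Real.cos_le_one β
  obtain ⟨v, hv1, hvmax⟩ := exists_max_vec B
  have hw1 : ‖perp v‖ = 1 := by rw [perp_norm, hv1]
  have hvw : (inner ℝ v (perp v) : ℝ) = 0 := perp_inner v
  set μ := ‖mLin B‖^2 with hμdef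
  have hμ0 : 0 ≤ μ := by rw [hμdef]; positivity
  have hμv : ‖Matrix.toEuclideanLin B v‖^2 = μ := by
    rw [hμdef, hvmax]; rfl
  set ν := ‖Matrix.toEuclideanLin B (perp v)‖^2 with hνdef
  have hν0 : 0 ≤ ν := by rw [hνdef]; positivity
  have hνμ : ν ≤ μ := by
    have h := (mLin B).le_opNorm (perp v)
    rw [hw1, mul_one, mLin_apply] at h
    rw [hνdef, hμdef]
    have h2 := sq_le_sq_of_le' (norm_nonneg (Matrix.toEuclideanLin B (perp v)))
      (norm_nonneg (mLin B)) (by norm_num : (0:ℝ) ≤ 1) (by rw [mul_one]; exact h)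
    calc ‖Matrix.toEuclideanLin B (perp v)‖^2 ≤ ‖mLin B‖^2 * 1^2 := h2
    _ = ‖mLin B‖^2 := by ring
  set σ := (inner ℝ (Matrix.toEuclideanLin B v) (Matrix.toEuclideanLin B (perp v)) : ℝ) with hσdef
  have key : ∀ t : ℝ, 2*t*σ ≤ t^2*(μ - ν) := by
    intro t
    have hle : ‖Matrix.toEuclideanLin B (v + t • perp v)‖^2 ≤ μ * ‖v + t • perp v‖^2 := by
      have h := (mLin B).le_opNorm (v + t • perp v)
      rw [mLin_apply] at h
      rw [hμdef]
      exact sq_le_sq_of_le' (norm_nonneg _) (norm_nonneg _) (norm_nonneg _) h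
    have e1 : ‖Matrix.toEuclideanLin B (v + t • perp v)‖^2 = μ + 2*t*σ + t^2*ν := by
      have h2 : Matrix.toEuclideanLin B (v + t • perp v)
          = (1:ℝ) • (Matrix.toEuclideanLin B v) + t • (Matrix.toEuclideanLin B (perp v)) := by
        rw [map_add, _root_.map_smul, one_smul]
      rw [h2, norm_comb, hμv, ← hνdef, ← hσdef]; ring
    have e2 : ‖v + t • perp v‖^2 = 1 + t^2 := by
      have h2 : v + t • perp v = (1:ℝ) • v + t • perp v := by rw [one_smul]
      rw [h2, norm_comb, hv1, hw1, hvw]; ring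
    rw [e1, e2] at hle
    linarith [hle]
  have hσ0 : σ = 0 := by
    rcases eq_or_lt_of_le hνμ with hEq | hLt
    · have h1 := key 1
      have h2 := key (-1)
      rw [← hEq] at h1 h2
      norm_num at h1 h2
      linarith
    · have hd : 0 < μ - ν := by linarith
      have h3 := key (σ/(μ-ν))
      have h4 : (σ/(μ-ν))^2 * (μ-ν) = (σ/(μ-ν)) * σ := by
        field_simp
      rw [h4] at h3
      have h5 : 0 ≤ (σ/(μ-ν)) * σ := by
        rw [div_mul_eq_mul_div]
        exact div_nonneg (mul_self_nonneg σ) hd.le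
      have h6 : (σ/(μ-ν)) * σ = 0 := le_antisymm (by linarith) h5
      rw [div_mul_eq_mul_div, div_eq_zero_iff] at h6
      rcases h6 with h6 | h6
      · exact pow_eq_zero_iff (n := 2) (by norm_num) |>.mp (by rw [sq]; exact h6)
      · linarith
  set a := (inner ℝ v θ : ℝ) with hadef
  set b := (inner ℝ (perp v) θ : ℝ) with hbdef
  have hθθ : (inner ℝ θ θ : ℝ) = 1 := by
    rw [real_inner_self_eq_norm_mul_norm, hθ]; norm_num
  have hab : a^2 + b^2 = 1 := by
    have h := parseval v hv1 θ θ
    rw [hθθ, ← hadef, ← hbdef] at h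
    linear_combination -h
  -- norm image formula
  have F1 : ∀ z : E2, ‖Matrix.toEuclideanLin B z‖^2
      = μ * (inner ℝ v z : ℝ)^2 + ν * (inner ℝ (perp v) z : ℝ)^2 := by
    intro z
    have h2 : Matrix.toEuclideanLin B z
        = (inner ℝ v z : ℝ) • (Matrix.toEuclideanLin B v)
          + (inner ℝ (perp v) z : ℝ) • (Matrix.toEuclideanLin B (perp v)) := by
      nth_rw 1 [expansion v hv1 z]
      rw [map_add, _root_.map_smul, _root_.map_smul]
    rw [h2, norm_comb, hμv, ← hνdef, ← hσdef, hσ0]; ring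
  -- coefficients of B^T B z
  have F2 : ∀ z : E2, (inner ℝ v (Matrix.toEuclideanLin Bᵀ (Matrix.toEuclideanLin B z)) : ℝ)
      = μ * (inner ℝ v z : ℝ) := by
    intro z
    rw [real_inner_comm, tel_transpose, real_inner_comm]
    nth_rw 1 [expansion v hv1 z]
    rw [map_add, _root_.map_smul, _root_.map_smul, inner_add_right,
      real_inner_smul_right, real_inner_smul_right]
    rw [real_inner_self_eq_norm_mul_norm]
    have h5 : ‖Matrix.toEuclideanLin B v‖ * ‖Matrix.toEuclideanLin B v‖ = μ := by
      rw [← sq, hμv]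
    rw [h5, ← hσdef, hσ0]; ring
  have F3 : ∀ z : E2, (inner ℝ (perp v) (Matrix.toEuclideanLin Bᵀ (Matrix.toEuclideanLin B z)) : ℝ)
      = ν * (inner ℝ (perp v) z : ℝ) := by
    intro z
    rw [real_inner_comm, tel_transpose, real_inner_comm]
    nth_rw 1 [expansion v hv1 z]
    rw [map_add, _root_.map_smul, _root_.map_smul, inner_add_right,
      real_inner_smul_right, real_inner_smul_right]
    rw [real_inner_self_eq_norm_mul_norm]
    have h5 : ‖Matrix.toEuclideanLin B (perp v)‖ * ‖Matrix.toEuclideanLin B (perp v)‖ = ν := by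
      rw [← sq, hνdef]
    have h6 : (inner ℝ (Matrix.toEuclideanLin B (perp v)) (Matrix.toEuclideanLin B v) : ℝ) = σ := by
      rw [real_inner_comm, hσdef]
    rw [h5, h6, hσ0]; ring
  -- inner ℝ products of θ with B^T B z and norm of B^T B z
  have G1 : ∀ z : E2, (inner ℝ θ (Matrix.toEuclideanLin Bᵀ (Matrix.toEuclideanLin B z)) : ℝ)
      = a * (μ * (inner ℝ v z : ℝ)) + b * (ν * (inner ℝ (perp v) z : ℝ)) := by
    intro z
    rw [parseval v hv1 θ (Matrix.toEuclideanLin Bᵀ (Matrix.toEuclideanLin B z)),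
      F2 z, F3 z, ← hadef, ← hbdef]
  have G2 : ∀ z : E2, ‖Matrix.toEuclideanLin Bᵀ (Matrix.toEuclideanLin B z)‖^2
      = (μ * (inner ℝ v z : ℝ))^2 + (ν * (inner ℝ (perp v) z : ℝ))^2 := by
    intro z
    rw [← real_inner_self_eq_norm_sq,
      parseval v hv1 (Matrix.toEuclideanLin Bᵀ (Matrix.toEuclideanLin B z))
        (Matrix.toEuclideanLin Bᵀ (Matrix.toEuclideanLin B z)), F2 z, F3 z]
    ring
  have ha1 : a1 B = ‖mLin B‖ := rfl
  have hμa : μ = a1 B ^ 2 := by rw [ha1, hμdef]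
  rcases eq_or_lt_of_le hνμ with hEq | hLt
  · -- equal singular values : B is conformal
    intro x hx
    have hx2 : ‖x‖^2 = (inner ℝ v x : ℝ)^2 + (inner ℝ (perp v) x : ℝ)^2 := by
      rw [← real_inner_self_eq_norm_sq, parseval v hv1 x x]; ring
    have hBx2 : ‖Matrix.toEuclideanLin B x‖^2 = μ * ‖x‖^2 := by
      rw [F1 x, hx2, hEq]; ring
    have hL0 : 0 ≤ Real.cos β * a1 B * ‖x‖ := by
      apply mul_nonneg (mul_nonneg hcβpos.le _) (norm_nonneg x)
      rw [ha1]; positivity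
    have ha10 : 0 ≤ a1 B := by rw [ha1]; positivity
    have hsq : (Real.cos β * a1 B * ‖x‖)^2 ≤ ‖Matrix.toEuclideanLin B x‖^2 := by
      rw [hBx2, hμa]
      have h1 : (Real.cos β * a1 B * ‖x‖)^2 ≤ (1 * a1 B * ‖x‖)^2 := by
        apply sq_le_sq' _ _
        · have h2 : 0 ≤ Real.cos β * a1 B * ‖x‖ := hL0
          have h3 : 0 ≤ 1 * a1 B * ‖x‖ := by positivity
          linarith
        · apply mul_le_mul_of_nonneg_right _ (norm_nonneg x)
          apply mul_le_mul_of_nonneg_right hcβ1 ha10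
      calc (Real.cos β * a1 B * ‖x‖)^2 ≤ (1 * a1 B * ‖x‖)^2 := h1
      _ = a1 B^2 * ‖x‖^2 := by ring
    exact le_of_sq_le_sq' hL0 (norm_nonneg _) hsq
  · -- distinct singular values : the maximal direction v must lie in the closed cone
    have hvcone : c^2 ≤ a^2 := by
      by_contra hcon
      push_neg at hcon
      -- unit vector orthogonal to θ, in the (v, perp v) frame
      set θ'' := (-b) • v + a • perp v with hθ''def
      have hvθ'' : (inner ℝ v θ'' : ℝ) = -b := by
        rw [hθ''def, inner_comb, real_inner_self_eq_norm_mul_norm, hv1, hvw]; ring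
      have hwv0 : (inner ℝ (perp v) v : ℝ) = 0 := by rw [real_inner_comm]; exact hvw
      have hww1 : (inner ℝ (perp v) (perp v) : ℝ) = 1 := by
        rw [real_inner_self_eq_norm_mul_norm, hw1]; norm_num
      have hwθ'' : (inner ℝ (perp v) θ'' : ℝ) = a := by
        rw [hθ''def, inner_comb, hwv0, hww1]; ring
      have hθθ'' : (inner ℝ θ θ'' : ℝ) = 0 := by
        rw [parseval v hv1 θ θ'', hvθ'', hwθ'', ← hadef, ← hbdef]; ring
      have hθ''2 : ‖θ''‖^2 = 1 := by
        rw [← real_inner_self_eq_norm_sq, parseval v hv1 θ'' θ'', hvθ'', hwθ'']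
        linear_combination hab
      -- boundary points of the cone
      have hbd : ∀ e : ℝ, e^2 = s^2 →
          c^2 * (μ^2*(c*a + e*(-b))^2 + ν^2*(c*b + e*a)^2)
            < (a*μ*(c*a + e*(-b)) + b*ν*(c*b + e*a))^2 := by
        intro e he
        set xe := c • θ + e • θ'' with hxedef
        have hinxe : (inner ℝ θ xe : ℝ) = c := by
          rw [hxedef, inner_comb, hθθ, hθθ'']; ring
        have hnxe2 : ‖xe‖^2 = 1 := by
          rw [hxedef, norm_comb, hθθ'', hθ''2, hθ]
          linear_combination he + hcs
        have hnxe : ‖xe‖ = 1 := eq_one_of_sq_eq_one (norm_nonneg xe) hnxe2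
        have hxene : xe ≠ 0 := by
          intro h0; rw [h0, norm_zero] at hnxe; linarith
        have hxecl : xe ∈ closure (cone θ β) := by
          apply mem_closure_cone θ hθ β hβ hβ'
          rw [hinxe, hnxe, mul_one, abs_of_pos hc]
        have hstep : Matrix.toEuclideanLin B xe ∈ cone θ β := hB xe hxecl hxene
        have hue : Matrix.toEuclideanLin Bᵀ (Matrix.toEuclideanLin B xe) ∈ cone θ β :=
          hBt _ (subset_closure hstep) hstep.1
        have hineq := hue.2
        have hvxe : (inner ℝ v xe : ℝ) = c*a + e*(-b) := by
          rw [hxedef, inner_comb, ← hadef, hvθ'']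
        have hwxe : (inner ℝ (perp v) xe : ℝ) = c*b + e*a := by
          rw [hxedef, inner_comb, ← hbdef, hwθ'']
        have hG1 := G1 xe
        have hG2 := G2 xe
        rw [hvxe, hwxe] at hG1 hG2
        set u := Matrix.toEuclideanLin Bᵀ (Matrix.toEuclideanLin B xe) with hudef
        have hsq : c^2 * ‖u‖^2 < (inner ℝ θ u : ℝ)^2 :=
          sq_lt_of_lt_abs' (mul_nonneg hc.le (norm_nonneg u)) hineq
        rw [hG1, hG2] at hsq
        calc c^2 * (μ^2*(c*a + e*(-b))^2 + ν^2*(c*b + e*a)^2)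
            = c^2 * ((μ * (c*a + e*(-b)))^2 + (ν * (c*b + e*a))^2) := by ring
          _ < (a * (μ * (c*a + e*(-b))) + b * (ν * (c*b + e*a)))^2 := hsq
          _ = (a*μ*(c*a + e*(-b)) + b*ν*(c*b + e*a))^2 := by ring
      have hfp0 := hbd s (by ring)
      have hfm0 := hbd (-s) (by ring)
      have hfp : c^2 * (μ^2*(c*a - s*b)^2 + ν^2*(c*b + s*a)^2)
          < (a*μ*(c*a - s*b) + b*ν*(c*b + s*a))^2 := by
        calc c^2 * (μ^2*(c*a - s*b)^2 + ν^2*(c*b + s*a)^2)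
            = c^2 * (μ^2*(c*a + s*(-b))^2 + ν^2*(c*b + s*a)^2) := by ring
          _ < (a*μ*(c*a + s*(-b)) + b*ν*(c*b + s*a))^2 := hfp0
          _ = (a*μ*(c*a - s*b) + b*ν*(c*b + s*a))^2 := by ring
      have hfm : c^2 * (μ^2*(c*a + s*b)^2 + ν^2*(c*b - s*a)^2)
          < (a*μ*(c*a + s*b) + b*ν*(c*b - s*a))^2 := by
        calc c^2 * (μ^2*(c*a + s*b)^2 + ν^2*(c*b - s*a)^2)
            = c^2 * (μ^2*(c*a + (-s)*(-b))^2 + ν^2*(c*b + (-s)*a)^2) := by ring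
          _ < (a*μ*(c*a + (-s)*(-b)) + b*ν*(c*b + (-s)*a))^2 := hfm0
          _ = (a*μ*(c*a + s*b) + b*ν*(c*b - s*a))^2 := by ring
      exact core hab hcs hs hc hcon hν0 hLt hfp hfm
    -- now the angle estimate and conclusion
    intro x hx
    set p := (inner ℝ v x : ℝ) with hpdef
    set q := (inner ℝ (perp v) x : ℝ) with hqdef
    have hx2 : ‖x‖^2 = (inner ℝ θ x : ℝ)^2 + (inner ℝ (perp θ) x : ℝ)^2 := by
      rw [← real_inner_self_eq_norm_sq, parseval θ hθ x x]; ring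
    have hv2' : (inner ℝ θ v : ℝ)^2 + (inner ℝ (perp θ) v : ℝ)^2 = 1 := by
      have h := parseval θ hθ v v
      rw [real_inner_self_eq_norm_mul_norm, hv1] at h
      linear_combination -h
    have hθv : c ≤ |(inner ℝ θ v : ℝ)| := by
      have : (inner ℝ θ v : ℝ) = a := by rw [hadef, real_inner_comm]
      rw [this]
      exact le_abs_of_sq' hc.le hvcone
    have hθx : c * ‖x‖ < |(inner ℝ θ x : ℝ)| := hx.2
    have hpθv : |(inner ℝ (perp θ) v : ℝ)| ≤ s :=
      abs_le_of_sq' hs.le (comp_bound1 hcs hθv hv2' hc.le)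
    have hpθx : |(inner ℝ (perp θ) x : ℝ)| ≤ s * ‖x‖ := by
      have h1 : (inner ℝ (perp θ) x : ℝ)^2 ≤ s^2 * ‖x‖^2 :=
        comp_bound2 hcs hθx.le hx2 hc.le (norm_nonneg x)
      have h2 : (inner ℝ (perp θ) x : ℝ)^2 ≤ (s * ‖x‖)^2 := by
        calc (inner ℝ (perp θ) x : ℝ)^2 ≤ s^2 * ‖x‖^2 := h1
        _ = (s * ‖x‖)^2 := by ring
      exact abs_le_of_sq' (by positivity) h2
    have hpexp : p = (inner ℝ θ v : ℝ) * (inner ℝ θ x : ℝ)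
        + (inner ℝ (perp θ) v : ℝ) * (inner ℝ (perp θ) x : ℝ) := by
      rw [hpdef]; exact parseval θ hθ v x
    have hA1 : c * (c * ‖x‖) ≤ |(inner ℝ θ v : ℝ) * (inner ℝ θ x : ℝ)| := by
      rw [abs_mul]
      apply mul_le_mul hθv hθx.le (by positivity) (abs_nonneg _)
    have hA2 : |(inner ℝ (perp θ) v : ℝ) * (inner ℝ (perp θ) x : ℝ)| ≤ s * (s * ‖x‖) := by
      rw [abs_mul]
      apply mul_le_mul hpθv hpθx (abs_nonneg _) hs.le
    have htri : |(inner ℝ θ v : ℝ) * (inner ℝ θ x : ℝ)| ≤ |p|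
        + |(inner ℝ (perp θ) v : ℝ) * (inner ℝ (perp θ) x : ℝ)| := by
      have h9 : (inner ℝ θ v : ℝ) * (inner ℝ θ x : ℝ)
          = p + -((inner ℝ (perp θ) v : ℝ) * (inner ℝ (perp θ) x : ℝ)) := by
        rw [hpexp]; ring
      rw [h9]
      calc |p + -((inner ℝ (perp θ) v : ℝ) * (inner ℝ (perp θ) x : ℝ))|
          ≤ |p| + |-((inner ℝ (perp θ) v : ℝ) * (inner ℝ (perp θ) x : ℝ))| := abs_add_le _ _
        _ = |p| + |(inner ℝ (perp θ) v : ℝ) * (inner ℝ (perp θ) x : ℝ)| := by rw [abs_neg]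
    have hplow : (c^2 - s^2) * ‖x‖ ≤ |p| := by linarith [hA1, hA2, htri]
    have hcs2 : 0 ≤ c^2 - s^2 := by rw [← hcosβ]; exact hcβpos.le
    have hp2 : (c^2 - s^2)^2 * ‖x‖^2 ≤ p^2 := by
      have h1 := sq_le_of_le_abs' (mul_nonneg hcs2 (norm_nonneg x)) hplow
      calc (c^2 - s^2)^2 * ‖x‖^2 = ((c^2 - s^2) * ‖x‖)^2 := by ring
      _ ≤ p^2 := h1
    have hBx2 : ‖Matrix.toEuclideanLin B x‖^2 = μ * p^2 + ν * q^2 := F1 x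
    have hL0 : 0 ≤ Real.cos β * a1 B * ‖x‖ := by
      apply mul_nonneg (mul_nonneg hcβpos.le _) (norm_nonneg x)
      rw [ha1]; positivity
    have hsq : (Real.cos β * a1 B * ‖x‖)^2 ≤ ‖Matrix.toEuclideanLin B x‖^2 := by
      rw [hBx2, hcosβ, hμa]
      have h10 : a1 B ^2 * ((c^2-s^2)^2 * ‖x‖^2) ≤ a1 B^2 * p^2 :=
        mul_le_mul_of_nonneg_left hp2 (sq_nonneg _)
      have h11 : 0 ≤ ν * q^2 := mul_nonneg hν0 (sq_nonneg q)
      calc ((c^2-s^2) * a1 B * ‖x‖)^2 = a1 B^2 * ((c^2-s^2)^2 * ‖x‖^2) := by ring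
      _ ≤ a1 B^2 * p^2 := h10
      _ ≤ a1 B^2 * p^2 + ν * q^2 := by linarith
    exact le_of_sq_le_sq' hL0 (norm_nonneg _) hsq

lemma wprod_preserves {κ : ℕ} (A : Fin κ → Matrix (Fin 2) (Fin 2) ℝ)
    (θ : E2) (β : ℝ)
    (hK1a : ∀ i, ∀ x ∈ closure (cone θ β), x ≠ 0 → Matrix.toEuclideanLin (A i) x ∈ cone θ β)
    (hK1b : ∀ i, ∀ x ∈ closure (cone θ β), x ≠ 0 → Matrix.toEuclideanLin (A i)ᵀ x ∈ cone θ β) :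
    ∀ li : List (Fin κ), li ≠ [] →
      (∀ x ∈ closure (cone θ β), x ≠ 0 → Matrix.toEuclideanLin (wprod A li) x ∈ cone θ β) ∧
      (∀ x ∈ closure (cone θ β), x ≠ 0 → Matrix.toEuclideanLin (wprod A li)ᵀ x ∈ cone θ β) := by
  intro li
  induction li with
  | nil => intro h; exact absurd rfl h
  | cons i rest ih =>
    intro _
    by_cases hr : rest = []
    · subst hr
      have hw : wprod A [i] = A i := by
        simp [wprod]
      rw [hw]
      exact ⟨hK1a i, hK1b i⟩
    · obtain ⟨h1, h2⟩ := ih hr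
      have hw : wprod A (i :: rest) = A i * wprod A rest := by
        simp [wprod]
      rw [hw]
      constructor
      · intro x hx hx0
        rw [tel_mul]
        have hmid := h1 x hx hx0
        exact hK1a i _ (subset_closure hmid) hmid.1
      · intro x hx hx0
        rw [Matrix.transpose_mul]
        rw [tel_mul]
        have hmid := hK1b i x hx hx0
        exact h2 _ (subset_closure hmid) hmid.1

/-- Lemma 4.1 (first part): under (K1a) and (K1b), `|A_li x| ≥ cos(β) α₁(A_li) |x|`
for all `x ∈ X(θ,β)` and all finite words `li`. -/
theorem norm_lower_bound_on_cone (κ : ℕ) (hκ : 2 ≤ κ)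
    (A : Fin κ → Matrix (Fin 2) (Fin 2) ℝ)
    (hinv : ∀ i, IsUnit (A i).det) (hnorm : ∀ i, a1 (A i) < 1)
    (θ : E2) (hθ : ‖θ‖ = 1) (β : ℝ) (hβ : 0 < β) (hβ' : β < π / 2)
    (hK1a : ∀ i, ∀ x ∈ closure (cone θ β), x ≠ 0 → Matrix.toEuclideanLin (A i) x ∈ cone θ β)
    (hK1b : ∀ i, ∀ x ∈ closure (cone θ β), x ≠ 0 → Matrix.toEuclideanLin (A i)ᵀ x ∈ cone θ β) :
    ∀ li : List (Fin κ), li ≠ [] → ∀ x ∈ cone θ β,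
      Real.cos β * a1 (wprod A li) * ‖x‖ ≤ ‖Matrix.toEuclideanLin (wprod A li) x‖ := by
  intro li hli x hx
  obtain ⟨h1, h2⟩ := wprod_preserves A θ β hK1a hK1b li hli
  exact single θ hθ β hβ hβ' (wprod A li) h1 h2 x hx


end
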